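/- Let ε > 0, let π̄ ∈ (0,1), and suppose that for every t̄ > t₋good one has ν_T((t₋good, t̄]) > 0 and ν_F((t₋good, t̄]) ≤ ε·ν_T((t₋good, t̄]), and also ν_T((t₋good, ∞)) > 0 and ν_F((t₋good, ∞)) ≤ ε·ν_T((t₋good, ∞)). Then for every π_F ∈ [0, π̄] and every t̄ > t₋good, |G(π_F, t̄)/G_T(t̄) − 1| ≤ (π̄/(1−π̄))·ε, where G_T(t̄) := ν_T((t₋good, t̄])/ν_T((t₋good, ∞)). (General version of Proposition 3 for an arbitrary upper bound π̄ on the share of false factors.) -/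

import Mathlib

open MeasureTheory

/-- The mixture measure ν_π := π·ν_F + (1−π)·ν_T. -/
noncomputable def mixMeasure (νF νT : Measure ℝ) (π : ℝ) : Measure ℝ :=
  ENNReal.ofReal π • νF + ENNReal.ofReal (1 - π) • νT

/-- Conditional distribution function of well-observed t-statistics:
G(π, t̄) := ν_π((t_good, t̄]) / ν_π((t_good, ∞)). -/
noncomputable def condCDF' (νF νT : Measure ℝ) (tgood π tbar : ℝ) : ℝ :=
  ((mixMeasure νF νT π) (Set.Ioc tgood tbar)).toReal /
    ((mixMeasure νF νT π) (Set.Ioi tgood)).toReal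

/-- Conditional distribution function of well-observed t-statistics assuming
all factors are true: G_T(t̄) := ν_T((t_good, t̄]) / ν_T((t_good, ∞)). -/
noncomputable def condCDFTrue (νT : Measure ℝ) (tgood tbar : ℝ) : ℝ :=
  (νT (Set.Ioc tgood tbar)).toReal / (νT (Set.Ioi tgood)).toReal


lemma mix_toReal (νF νT : Measure ℝ) [IsProbabilityMeasure νF] [IsProbabilityMeasure νT]
    (π : ℝ) (hπ0 : 0 ≤ π) (hπ1 : π ≤ 1) (s : Set ℝ) :
    ((mixMeasure νF νT π) s).toReal = π * (νF s).toReal + (1 - π) * (νT s).toReal := by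
  have h1 : ENNReal.ofReal π * νF s ≠ ⊤ :=
    ENNReal.mul_ne_top ENNReal.ofReal_ne_top (measure_ne_top _ _)
  have h2 : ENNReal.ofReal (1 - π) * νT s ≠ ⊤ :=
    ENNReal.mul_ne_top ENNReal.ofReal_ne_top (measure_ne_top _ _)
  simp [mixMeasure, Measure.add_apply, Measure.smul_apply, smul_eq_mul,
    ENNReal.toReal_add h1 h2, ENNReal.toReal_mul,
    ENNReal.toReal_ofReal hπ0, ENNReal.toReal_ofReal (by linarith : (0:ℝ) ≤ 1 - π)]

/-- Proposition 3 (Strongly Identified Parameters): the model's predictions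
about well-observed t-statistics are within a factor (π̄/(1−π̄))·ε of the predictions
obtained by assuming all factors are true. -/
theorem strong_identification_general
    (νF νT : Measure ℝ) [IsProbabilityMeasure νF] [IsProbabilityMeasure νT]
    (hνFsupp : νF (Set.Iio 0) = 0) (hνTsupp : νT (Set.Iio 0) = 0)
    (tgood : ℝ) (htgood : 0 < tgood)
    (ε : ℝ) (hε : 0 < ε) (πbar : ℝ) (hπbar : πbar ∈ Set.Ioo (0 : ℝ) 1)
    (hIoc : ∀ tbar : ℝ, tgood < tbar →
      0 < (νT (Set.Ioc tgood tbar)).toReal ∧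
      (νF (Set.Ioc tgood tbar)).toReal ≤ ε * (νT (Set.Ioc tgood tbar)).toReal)
    (hIoiT : 0 < (νT (Set.Ioi tgood)).toReal)
    (hIoiF : (νF (Set.Ioi tgood)).toReal ≤ ε * (νT (Set.Ioi tgood)).toReal) :
    ∀ πF : ℝ, πF ∈ Set.Icc (0 : ℝ) πbar →
      ∀ tbar : ℝ, tgood < tbar →
        |condCDF' νF νT tgood πF tbar / condCDFTrue νT tgood tbar - 1| ≤ (πbar / (1 - πbar)) * ε := by
  obtain ⟨hπb0, hπb1⟩ := hπbar
  intro p hp tbar htbar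
  obtain ⟨hp0, hppb⟩ := hp
  have hp1 : p < 1 := lt_of_le_of_lt hppb hπb1
  set a := (νT (Set.Ioc tgood tbar)).toReal with ha_def
  set A := (νT (Set.Ioi tgood)).toReal with hA_def
  set b := (νF (Set.Ioc tgood tbar)).toReal with hb_def
  set B := (νF (Set.Ioi tgood)).toReal with hB_def
  obtain ⟨ha, hba⟩ := hIoc tbar htbar
  have hb0 : 0 ≤ b := ENNReal.toReal_nonneg
  have hB0 : 0 ≤ B := ENNReal.toReal_nonneg
  have hA : 0 < A := hIoiT
  have e1 : condCDF' νF νT tgood p tbar = (p * b + (1 - p) * a) / (p * B + (1 - p) * A) := by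
    rw [condCDF', mix_toReal νF νT p hp0 hp1.le, mix_toReal νF νT p hp0 hp1.le]
  have e2 : condCDFTrue νT tgood tbar = a / A := rfl
  have hD : 0 < p * B + (1 - p) * A := by nlinarith
  have hx : condCDF' νF νT tgood p tbar / condCDFTrue νT tgood tbar - 1
      = p * (A * b - a * B) / ((p * B + (1 - p) * A) * a) := by
    rw [e1, e2]
    have ha' : a ≠ 0 := ne_of_gt ha
    field_simp
    ring
  rw [hx, abs_div, abs_of_pos (by positivity : (0:ℝ) < (p * B + (1 - p) * A) * a),
    div_le_iff₀ (by positivity)]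
  have habs : |A * b - a * B| ≤ ε * a * A := by
    rw [abs_le]
    constructor <;> nlinarith
  have h1 : |p * (A * b - a * B)| ≤ p * (ε * a * A) := by
    rw [abs_mul, abs_of_nonneg hp0]
    exact mul_le_mul_of_nonneg_left habs hp0
  have hkey : p * A ≤ (πbar / (1 - πbar)) * (p * B + (1 - p) * A) := by
    rw [div_mul_eq_mul_div, le_div_iff₀ (by linarith)]
    nlinarith [mul_nonneg (mul_nonneg hπb0.le hp0) hB0,
      mul_le_mul_of_nonneg_right (show p * (1 - πbar) ≤ πbar * (1 - p) by nlinarith) hA.le]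
  calc |p * (A * b - a * B)| ≤ p * (ε * a * A) := h1
    _ ≤ πbar / (1 - πbar) * ε * ((p * B + (1 - p) * A) * a) := by nlinarith
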